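/- Let B ⊆ ℕ^m be a positive affine semigroup such that C(B) is generated by linearly independent elements e_1,…,e_d ∈ B, and let A be the submonoid of B generated by e_1,…,e_d. Assume that for every coset g of G(A) in G(B) there is an h_g ∈ G(B) such that either B ∩ g = h_g + A or B ∩ g = h_g + (A ∖ {0}). Let H := {h ∈ G(B) : B ∩ (h + G(A)) = h + (A ∖ {0})}. If h ∈ H and b is an element of the minimal generating set Hilb(B) of B such that h + b ∉ B, then b ∉ {e_1,…,e_d} and h + b ∈ H, i.e., B ∩ ((h + b) + G(A)) = (h + b) + (A ∖ {0}). -/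

import Mathlib

open scoped BigOperators

/-- The coordinatewise cast `ℕ^m → ℤ^m`. -/
def ntz {m : ℕ} (x : Fin m → ℕ) : Fin m → ℤ := fun i => (x i : ℤ)

/-- The coordinatewise cast `ℕ^m → ℚ^m`. -/
def ntq {m : ℕ} (x : Fin m → ℕ) : Fin m → ℚ := fun i => (x i : ℚ)

/-- `G(S)`: the subgroup of `ℤ^m` generated by an affine semigroup `S ⊆ ℕ^m`. -/
def grp {m : ℕ} (S : AddSubmonoid (Fin m → ℕ)) : AddSubgroup (Fin m → ℤ) :=
  AddSubgroup.closure (ntz '' (S : Set (Fin m → ℕ)))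

/-- `C(S)`: the cone in `ℚ^m` generated by `S`, i.e. all nonnegative rational
linear combinations of elements of `S`. -/
def cone {m : ℕ} (S : AddSubmonoid (Fin m → ℕ)) : Set (Fin m → ℚ) :=
  {x | ∃ (n : ℕ) (c : Fin n → ℚ) (v : Fin n → Fin m → ℕ),
    (∀ i, 0 ≤ c i) ∧ (∀ i, v i ∈ S) ∧ x = ∑ i, c i • ntq (v i)}

/-- `B_A := {x ∈ B : x ∉ B + (A \ {0})}`. -/
def BA {m : ℕ} (A B : AddSubmonoid (Fin m → ℕ)) : Set (Fin m → ℕ) :=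
  {x | x ∈ B ∧ ¬ ∃ b ∈ B, ∃ a ∈ A, a ≠ 0 ∧ x = b + a}

/-- `Hilb(S)`: the unique minimal generating set of a positive affine semigroup
`S ⊆ ℕ^m`, i.e. the set of nonzero elements of `S` that are not sums of two nonzero
elements of `S`. -/
def Hilb {m : ℕ} (S : AddSubmonoid (Fin m → ℕ)) : Set (Fin m → ℕ) :=
  {x | x ∈ S ∧ x ≠ 0 ∧ ¬ ∃ y ∈ S, ∃ z ∈ S, y ≠ 0 ∧ z ≠ 0 ∧ x = y + z}

section hlp
variable {m d : ℕ}

lemma ntz_add (x y : Fin m → ℕ) : ntz (x + y) = ntz x + ntz y := by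
  funext i; simp [ntz]

lemma ntz_zero : ntz (0 : Fin m → ℕ) = 0 := by funext i; simp [ntz]

lemma ntz_inj : Function.Injective (ntz (m := m)) := by
  intro x y hxy
  funext i
  have := congrFun hxy i
  simpa [ntz] using this

lemma ntz_sum_smul (e : Fin d → Fin m → ℕ) (n : Fin d → ℕ) :
    ntz (∑ k, n k • e k) = ∑ k, (n k : ℤ) • ntz (e k) := by
  funext i
  simp [ntz, Finset.sum_apply, Pi.smul_apply, smul_eq_mul]

lemma coords_uniq (e : Fin d → Fin m → ℕ)
    (hli : LinearIndependent ℚ (fun k => ntq (e k)))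
    (c c' : Fin d → ℤ)
    (hcc : ∑ k, c k • ntz (e k) = ∑ k, c' k • ntz (e k)) : c = c' := by
  have key : ∀ k, ((c k - c' k : ℤ) : ℚ) = 0 := by
    refine Fintype.linearIndependent_iff.mp hli
      (fun k => ((c k - c' k : ℤ) : ℚ)) ?_
    funext i
    have h2 := congrFun hcc i
    simp only [Finset.sum_apply, Pi.smul_apply, smul_eq_mul, Pi.zero_apply,
      ntq, ntz, Int.cast_sub, sub_mul] at h2 ⊢
    rw [Finset.sum_sub_distrib]
    have hc : ∀ (f : Fin d → ℤ), ((∑ k, f k * (e k i : ℤ) : ℤ) : ℚ)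
        = ∑ k, (f k : ℚ) * ((e k i : ℕ) : ℚ) := by
      intro f; push_cast; rfl
    rw [sub_eq_zero, ← hc, ← hc, h2]
  funext k
  have := key k
  have : (c k - c' k : ℤ) = 0 := by exact_mod_cast this
  omega

lemma mem_closure_coords (e : Fin d → Fin m → ℕ) (a : Fin m → ℕ)
    (ha : a ∈ AddSubmonoid.closure (Set.range e)) :
    ∃ n : Fin d → ℕ, a = ∑ k, n k • e k := by
  induction ha using AddSubmonoid.closure_induction with
  | mem x hx =>
      obtain ⟨k, rfl⟩ := hx
      refine ⟨fun j => if j = k then 1 else 0, ?_⟩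
      simp [ite_smul, Finset.sum_ite_eq']
  | zero => exact ⟨0, by simp⟩
  | add x y _ _ hx hy =>
      obtain ⟨n1, rfl⟩ := hx
      obtain ⟨n2, rfl⟩ := hy
      exact ⟨n1 + n2, by simp [add_smul, Finset.sum_add_distrib]⟩

lemma coords_mem_closure (e : Fin d → Fin m → ℕ) (n : Fin d → ℕ) :
    (∑ k, n k • e k) ∈ AddSubmonoid.closure (Set.range e) := by
  exact sum_mem (fun k _ => nsmul_mem
    (AddSubmonoid.subset_closure (Set.mem_range_self k)) _)

end hlp

lemma mem_grp_coords (e : Fin d → Fin m → ℕ) (v : Fin m → ℤ)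
    (hv : v ∈ AddSubgroup.closure
      (ntz '' ((AddSubmonoid.closure (Set.range e) : AddSubmonoid (Fin m → ℕ)) : Set (Fin m → ℕ)))) :
    ∃ c : Fin d → ℤ, v = ∑ k, c k • ntz (e k) := by
  induction hv using AddSubgroup.closure_induction with
  | mem x hx =>
      obtain ⟨a, ha, rfl⟩ := hx
      obtain ⟨n, rfl⟩ := mem_closure_coords e a ha
      exact ⟨fun k => (n k : ℤ), ntz_sum_smul e n⟩
  | zero => exact ⟨0, by simp⟩
  | add x y _ _ hx hy =>
      obtain ⟨c1, rfl⟩ := hx; obtain ⟨c2, rfl⟩ := hy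
      exact ⟨c1 + c2, by rw [← Finset.sum_add_distrib]; simp [add_smul]⟩
  | neg x _ hx =>
      obtain ⟨c1, rfl⟩ := hx
      refine ⟨-c1, ?_⟩
      rw [← Finset.sum_neg_distrib]
      simp [neg_smul]

lemma delta_coords (e : Fin d → Fin m → ℕ)
    (hli : LinearIndependent ℚ (fun k => ntq (e k)))
    (n : Fin d → ℕ) (c : Fin d → ℤ) (k : Fin d)
    (hEq : ntz (∑ j, n j • e j) = ntz (e k) - ∑ j, c j • ntz (e j)) :
    ∀ j, (n j : ℤ) = (if j = k then 1 else 0) - c j := by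
  have h1 : ntz (e k) = ∑ j, (if j = k then (1:ℤ) else 0) • ntz (e j) := by
    simp [ite_smul, Finset.sum_ite_eq']
  have h2 : ∑ j, ((n j : ℤ)) • ntz (e j)
      = ∑ j, ((if j = k then (1:ℤ) else 0) - c j) • ntz (e j) := by
    rw [← ntz_sum_smul, hEq, h1, ← Finset.sum_sub_distrib]
    simp [sub_smul]
  have h3 := coords_uniq e hli _ _ h2
  exact fun j => congrFun h3 j

lemma coords_nat_zero (e : Fin d → Fin m → ℕ)
    (hli : LinearIndependent ℚ (fun k => ntq (e k)))
    (n : Fin d → ℕ) (h0 : (∑ j, n j • e j) = 0) : n = 0 := by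
  have h1 : ntz (∑ j, n j • e j) = ∑ j, (0:ℤ) • ntz (e j) := by
    rw [h0, ntz_zero]; simp
  rw [ntz_sum_smul] at h1
  have h2 := coords_uniq e hli _ _ h1
  funext j
  have := congrFun h2 j
  simpa using this


/-- Let `B ⊆ ℕ^m` be a positive affine semigroup such that `C(B)` is
generated by linearly independent `e₁,…,e_d ∈ B`, and let `A` be the submonoid of `B`
generated by the `e_k`.  Assume that for every coset `g` of `G(A)` in `G(B)` there is
`h_g ∈ G(B)` with `B ∩ g = h_g + A` or `B ∩ g = h_g + (A \ {0})`.  Let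
`H := {h ∈ G(B) : B ∩ (h + G(A)) = h + (A \ {0})}`.  If `h ∈ H` and `b ∈ Hilb(B)`
with `h + b ∉ B`, then `b ∉ {e₁,…,e_d}` and `h + b ∈ H`. -/
theorem stmt12 {m d : ℕ} (B : AddSubmonoid (Fin m → ℕ)) (hBfg : B.FG)
    (e : Fin d → Fin m → ℕ) (he : ∀ k, e k ∈ B)
    (hli : LinearIndependent ℚ (fun k => ntq (e k)))
    (A : AddSubmonoid (Fin m → ℕ)) (hA : A = AddSubmonoid.closure (Set.range e))
    (hcone : cone B = cone A)
    (hdec : ∀ x ∈ grp B, ∃ hg ∈ grp B,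
      {y : Fin m → ℤ | ∃ b ∈ B, ntz b = y ∧ y - x ∈ grp A} =
          {y : Fin m → ℤ | ∃ a ∈ A, y = hg + ntz a} ∨
      {y : Fin m → ℤ | ∃ b ∈ B, ntz b = y ∧ y - x ∈ grp A} =
          {y : Fin m → ℤ | ∃ a ∈ A, a ≠ 0 ∧ y = hg + ntz a})
    (H : Set (Fin m → ℤ))
    (hH : H = {h : Fin m → ℤ | h ∈ grp B ∧
      {y : Fin m → ℤ | ∃ b ∈ B, ntz b = y ∧ y - h ∈ grp A} =
        {y : Fin m → ℤ | ∃ a ∈ A, a ≠ 0 ∧ y = h + ntz a}})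
    (h : Fin m → ℤ) (hhH : h ∈ H)
    (b : Fin m → ℕ) (hb : b ∈ Hilb B)
    (hnb : ¬ ∃ c ∈ B, ntz c = h + ntz b) :
    b ∉ Set.range e ∧ h + ntz b ∈ H := by
  rw [hH] at hhH ⊢
  obtain ⟨hhGB, hcoset⟩ := hhH
  have hbB : b ∈ B := hb.1
  have heA : ∀ k, e k ∈ A := fun k => by
    rw [hA]; exact AddSubmonoid.subset_closure (Set.mem_range_self k)
  have hek0 : ∀ k, e k ≠ 0 := by
    intro k hk
    have := hli.ne_zero k
    apply this
    show ntq (e k) = 0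
    funext i
    simp [ntq, hk, Pi.zero_apply]
  have hAcoords : ∀ a ∈ A, ∃ n : Fin d → ℕ, a = ∑ k, n k • e k := by
    intro a ha; rw [hA] at ha; exact mem_closure_coords e a ha
  have hAof : ∀ n : Fin d → ℕ, (∑ k, n k • e k) ∈ A := by
    intro n; rw [hA]; exact coords_mem_closure e n
  have hgrpA : ∀ v ∈ grp A, ∃ c : Fin d → ℤ, v = ∑ k, c k • ntz (e k) := by
    intro v hv
    apply mem_grp_coords e v
    rw [hA] at hv
    exact hv
  set t := h + ntz b with htdef
  -- part 1
  have part1 : b ∉ Set.range e := by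
    rintro ⟨k, rfl⟩
    refine hnb ?_
    have hmem : h + ntz (e k) ∈
        {y : Fin m → ℤ | ∃ b ∈ B, ntz b = y ∧ y - h ∈ grp A} := by
      rw [hcoset]; exact ⟨e k, heA k, hek0 k, rfl⟩
    obtain ⟨c, hcB, hc, -⟩ := hmem
    exact ⟨c, hcB, hc⟩
  refine ⟨part1, ?_⟩
  have htGB : t ∈ grp B :=
    AddSubgroup.add_mem _ hhGB
      (AddSubgroup.subset_closure (Set.mem_image_of_mem _ hbB))
  refine ⟨htGB, ?_⟩
  -- step A : the inclusion t + (A\{0}) ⊆ B ∩ coset(t)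
  have stepA : ∀ a ∈ A, a ≠ 0 →
      (t + ntz a) ∈ {y : Fin m → ℤ | ∃ c ∈ B, ntz c = y ∧ y - t ∈ grp A} := by
    intro a haA ha0
    have h1 : h + ntz a ∈ {y : Fin m → ℤ | ∃ b ∈ B, ntz b = y ∧ y - h ∈ grp A} := by
      rw [hcoset]; exact ⟨a, haA, ha0, rfl⟩
    obtain ⟨c1, hc1B, hc1, -⟩ := h1
    refine ⟨c1 + b, B.add_mem hc1B hbB, ?_, ?_⟩
    · rw [ntz_add, hc1, htdef]; abel
    · have h2 : t + ntz a - t = ntz a := by abel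
      rw [h2]
      exact AddSubgroup.subset_closure (Set.mem_image_of_mem _ haA)
  have htnotS : t ∉ {y : Fin m → ℤ | ∃ c ∈ B, ntz c = y ∧ y - t ∈ grp A} := by
    rintro ⟨c', hc'B, hc'e, -⟩
    exact hnb ⟨c', hc'B, hc'e⟩
  obtain ⟨hg, hgGB, hcase⟩ := hdec t htGB
  -- shared: derive the "delta" constraints once hg - t has coordinates c
  rcases hcase with hc1 | hc2
  · -- Case 1 : B ∩ coset(t) = hg + A
    have hgS : hg ∈ {y : Fin m → ℤ | ∃ c ∈ B, ntz c = y ∧ y - t ∈ grp A} := by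
      rw [hc1]
      exact ⟨0, A.zero_mem, by rw [ntz_zero, add_zero]⟩
    obtain ⟨c0, hc0B, hc0eq, hvA⟩ := hgS
    obtain ⟨c, hv⟩ := hgrpA _ hvA
    have hk : ∀ k : Fin d, ∃ n : Fin d → ℕ,
        ∀ j, (n j : ℤ) = (if j = k then 1 else 0) - c j := by
      intro k
      have hmem := stepA (e k) (heA k) (hek0 k)
      rw [hc1] at hmem
      obtain ⟨a, haA, haeq⟩ := hmem
      obtain ⟨n, rfl⟩ := hAcoords a haA
      refine ⟨n, delta_coords e hli n c k ?_⟩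
      have h4 : ntz (∑ j, n j • e j) = t + ntz (e k) - hg := by
        rw [eq_sub_iff_add_eq, add_comm]
        exact haeq.symm
      rw [h4, ← hv]; abel
    have hineq : ∀ k j : Fin d, 0 ≤ (if j = k then (1:ℤ) else 0) - c j := by
      intro k j
      obtain ⟨n, hn⟩ := hk k
      rw [← hn j]
      exact Int.natCast_nonneg _
    have hj0 : ∃ j0, 0 < c j0 := by
      by_contra hcon
      push_neg at hcon
      apply htnotS
      rw [hc1]
      refine ⟨∑ j, (-(c j)).toNat • e j, hAof _, ?_⟩
      have h5 : ntz (∑ j, (-(c j)).toNat • e j) = -(hg - t) := by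
        rw [ntz_sum_smul, hv, ← Finset.sum_neg_distrib]
        refine Finset.sum_congr rfl (fun j _ => ?_)
        rw [← neg_smul]
        congr 1
        have := hcon j
        omega
      rw [h5]; abel
    obtain ⟨j0, hj0pos⟩ := hj0
    have hcj0 : c j0 = 1 := by
      have := hineq j0 j0
      simp only [if_pos rfl] at this
      omega
    have hall : ∀ k : Fin d, k = j0 := by
      intro k
      by_contra hkj
      have h5 := hineq k j0
      rw [if_neg (fun hh => hkj hh.symm)] at h5
      omega
    have huniv : (Finset.univ : Finset (Fin d)) = {j0} := by
      ext x; simp [hall x]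
    have hgeq : hg = ntz (e j0) + t := by
      have h6 : hg - t = ntz (e j0) := by
        rw [hv, huniv, Finset.sum_singleton, hcj0, one_smul]
      rw [← h6]; abel
    rw [hc1]
    ext y
    simp only [Set.mem_setOf_eq]
    constructor
    · rintro ⟨a, haA, rfl⟩
      refine ⟨e j0 + a, A.add_mem (heA j0) haA, ?_, ?_⟩
      · intro h0
        apply hek0 j0
        funext i
        have h7 : e j0 i + a i = 0 := congrFun h0 i
        show e j0 i = 0
        omega
      · rw [ntz_add, hgeq]; abel
    · rintro ⟨a, haA, ha0, rfl⟩
      have h8 := stepA a haA ha0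
      rw [hc1] at h8
      exact h8
  · ext y
    constructor
    · intro hy
      obtain ⟨cB, hcB, hce, hyt⟩ := hy
      have hy2 : y ∈ {y : Fin m → ℤ | ∃ a ∈ A, a ≠ 0 ∧ y = hg + ntz a} := by
        rw [← hc2]; exact ⟨cB, hcB, hce, hyt⟩
      obtain ⟨a0, ha0A, ha00, hyeq⟩ := hy2
      have hvA : hg - t ∈ grp A := by
        have h8 : hg - t = (y - t) - ntz a0 := by rw [hyeq]; abel
        rw [h8]
        exact AddSubgroup.sub_mem _ hyt
          (AddSubgroup.subset_closure (Set.mem_image_of_mem _ ha0A))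
      obtain ⟨c, hv⟩ := hgrpA _ hvA
      have hk : ∀ k : Fin d, ∃ n : Fin d → ℕ,
          (∀ j, (n j : ℤ) = (if j = k then 1 else 0) - c j) ∧ n ≠ 0 := by
        intro k
        have hmem := stepA (e k) (heA k) (hek0 k)
        rw [hc2] at hmem
        obtain ⟨a, haA, ha0, haeq⟩ := hmem
        obtain ⟨n, rfl⟩ := hAcoords a haA
        refine ⟨n, ?_, ?_⟩
        · apply delta_coords e hli n c k
          have h4 : ntz (∑ j, n j • e j) = t + ntz (e k) - hg := by
            rw [eq_sub_iff_add_eq, add_comm]; exact haeq.symm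
          rw [h4, ← hv]; abel
        · intro hn0; apply ha0; rw [hn0]; simp
      have hineq : ∀ k j : Fin d, 0 ≤ (if j = k then (1:ℤ) else 0) - c j := by
        intro k j; obtain ⟨n, hn, -⟩ := hk k; rw [← hn j]; exact Int.natCast_nonneg _
      have hnopos : ∀ j, c j ≤ 0 := by
        intro j0
        by_contra hpos
        push_neg at hpos
        have hcj0 : c j0 = 1 := by
          have := hineq j0 j0; simp only [if_pos rfl] at this; omega
        obtain ⟨n, hn, hnne⟩ := hk j0
        obtain ⟨j1, hj1⟩ := Function.ne_iff.mp hnne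
        have h9 := hn j1
        by_cases hj : j1 = j0
        · subst hj
          rw [if_pos rfl, hcj0] at h9
          simp only [Pi.zero_apply] at hj1
          omega
        · have h10 := hineq j1 j0
          rw [if_neg (fun hh => hj hh.symm)] at h10
          omega
      have hczero : ∀ j, c j = 0 := by
        intro j
        by_contra hne
        have hlt : c j < 0 := lt_of_le_of_ne (hnopos j) hne
        apply htnotS
        rw [hc2]
        refine ⟨∑ j', (-(c j')).toNat • e j', hAof _, ?_, ?_⟩
        · intro h0
          have h11 := coords_nat_zero e hli _ h0
          have h10 := congrFun h11 j
          simp only [Pi.zero_apply] at h10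
          omega
        · have h5 : ntz (∑ j', (-(c j')).toNat • e j') = -(hg - t) := by
            rw [ntz_sum_smul, hv, ← Finset.sum_neg_distrib]
            refine Finset.sum_congr rfl (fun j' _ => ?_)
            rw [← neg_smul]
            congr 1
            have := hnopos j'
            omega
          rw [h5]; abel
      have hgt : hg = t := by
        have h12 : hg - t = 0 := by
          rw [hv]
          exact Finset.sum_eq_zero (fun j _ => by rw [hczero j, zero_smul])
        exact sub_eq_zero.mp h12
      exact ⟨a0, ha0A, ha00, by rw [hyeq, hgt]⟩
    · rintro ⟨a, haA, ha0, rfl⟩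
      exact stepA a haA ha0
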